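/- Let M be a C¹ symmetric positive-definite matrix field on a compact convex domain Ω with differentiable-metric variation σ1, and let V ⊆ Ω be a finite asymmetric ε-net with respect to D^{DW} (i.e., a (ε,ε)-Delone set: an ε-cover and an asymmetric ε-packing). If σ1·ε ≤ 0.09868, then the Du/Wang Voronoi diagram of V (regions taken with respect to D^{DW}) is orphan-free: for every v ∈ V, every connected component of R(v) contains v. -/

import Mathlib

open Matrix Set

attribute [local instance] Matrix.normedAddCommGroup Matrix.normedSpace

/-- The application of a matrix to a vector of Euclidean space. -/
noncomputable def mav {n : ℕ} (A : Matrix (Fin n) (Fin n) ℝ)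
    (x : EuclideanSpace ℝ (Fin n)) : EuclideanSpace ℝ (Fin n) :=
  Matrix.toEuclideanLin A x

/-- The spectral (operator) norm `ρ` of a matrix. -/
noncomputable def rho {n : ℕ} (A : Matrix (Fin n) (Fin n) ℝ) : ℝ :=
  ‖LinearMap.toContinuousLinearMap (Matrix.toEuclideanLin A)‖

/-- The smallest singular value `ρ_m` of an (invertible) matrix: `ρ_m(A) = ρ(A⁻¹)⁻¹`. -/
noncomputable def rhom {n : ℕ} (A : Matrix (Fin n) (Fin n) ℝ) : ℝ :=
  (rho A⁻¹)⁻¹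

/-- The Voronoi region of a site `v ∈ V` inside `Ω`, w.r.t. an asymmetric distance `D`. -/
def vorRegion {n : ℕ} (Ω V : Set (EuclideanSpace ℝ (Fin n)))
    (D : EuclideanSpace ℝ (Fin n) → EuclideanSpace ℝ (Fin n) → ℝ)
    (v : EuclideanSpace ℝ (Fin n)) : Set (EuclideanSpace ℝ (Fin n)) :=
  {p ∈ Ω | ∀ w ∈ V, D p v ≤ D p w}

/-- The set of ratios whose supremum is the worst-case metric variation `σ0`. -/
def sigma0Set {n : ℕ} (Ω : Set (EuclideanSpace ℝ (Fin n)))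
    (M : EuclideanSpace ℝ (Fin n) → Matrix (Fin n) (Fin n) ℝ) : Set ℝ :=
  {x | ∃ a ∈ Ω, ∃ b ∈ Ω, a ≠ b ∧
    x = rho (M b * (M a)⁻¹ - 1) / ‖mav (M a) (a - b)‖}

/-- The set of ratios whose supremum is the differentiable-metric variation `σ1`
(the directional derivative of `M` at `p` in direction `r` is `fderivWithin ℝ M Ω p r`). -/
noncomputable def sigma1Set {n : ℕ} (Ω : Set (EuclideanSpace ℝ (Fin n)))
    (M : EuclideanSpace ℝ (Fin n) → Matrix (Fin n) (Fin n) ℝ) : Set ℝ :=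
  {x | ∃ p ∈ Ω, ∃ r : EuclideanSpace ℝ (Fin n), ‖r‖ = 1 ∧
    x = rho ((fderivWithin ℝ M Ω p r) * (M p)⁻¹) / ‖mav (M p) r‖}

namespace OFree

variable {n : ℕ}

local notation "E" => EuclideanSpace ℝ (Fin n)
local notation "MAT" => Matrix (Fin n) (Fin n) ℝ

noncomputable def Tc (A : MAT) : E →L[ℝ] E := LinearMap.toContinuousLinearMap (Matrix.toEuclideanLin A)

lemma Tc_apply (A : MAT) (x : E) : Tc A x = mav A x := rfl

lemma rho_eq (A : MAT) : rho A = ‖Tc A‖ := rfl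

lemma mav_norm_le (A : MAT) (x : E) : ‖mav A x‖ ≤ rho A * ‖x‖ := by
  rw [← Tc_apply, rho_eq]; exact (Tc A).le_opNorm x

lemma mav_mul (A B : MAT) (x : E) : mav (A * B) x = mav A (mav B x) := by
  simp [mav, Matrix.toEuclideanLin_apply, Matrix.mulVec_mulVec]

lemma mav_smul_mat (c : ℝ) (A : MAT) (x : E) : mav (c • A) x = c • mav A x := by
  simp [mav]

lemma mav_smul (A : MAT) (c : ℝ) (x : E) : mav A (c • x) = c • mav A x := by
  simp [mav]

lemma mav_sub (A : MAT) (x y : E) : mav A (x - y) = mav A x - mav A y := by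
  simp [mav]

lemma mav_neg (A : MAT) (x : E) : mav A (-x) = - mav A x := by
  simp [mav]

lemma rho_nonneg (A : MAT) : 0 ≤ rho A := norm_nonneg _

lemma rho_smul (c : ℝ) (A : MAT) : rho (c • A) = |c| * rho A := by
  rw [rho_eq, rho_eq]
  have : Tc (c • A) = c • Tc A := by
    ext x; simp [Tc_apply, mav_smul_mat]
  rw [this]
  rw [show ‖c • Tc A‖ = ‖c‖ * ‖Tc A‖ from norm_smul c (Tc A), Real.norm_eq_abs]

lemma mav_ne_zero {A : MAT} (hA : A.PosDef) {x : E} (hx : x ≠ 0) : mav A x ≠ 0 := by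
  intro h
  have hx' : (WithLp.equiv 2 (Fin n → ℝ)) x ≠ 0 := by
    simpa using hx
  have h2 := hA.dotProduct_mulVec_pos hx'
  have hmv : A *ᵥ ((WithLp.equiv 2 (Fin n → ℝ)) x) = 0 := by
    have := congrArg (WithLp.equiv 2 (Fin n → ℝ)) h
    simpa [mav, Matrix.toEuclideanLin_apply] using this
  rw [hmv] at h2
  simp at h2

lemma mav_norm_pos {A : MAT} (hA : A.PosDef) {x : E} (hx : x ≠ 0) : 0 < ‖mav A x‖ :=
  norm_pos_iff.mpr (mav_ne_zero hA hx)

lemma matrix_inv_cancel {A : MAT} (hA : A.PosDef) (B : MAT) : (B * A⁻¹) * A = B := by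
  rw [Matrix.mul_assoc, Matrix.nonsing_inv_mul A (isUnit_iff_ne_zero.mpr (ne_of_gt hA.det_pos)),
    Matrix.mul_one]

variable {Ω : Set (EuclideanSpace ℝ (Fin n))} {M : EuclideanSpace ℝ (Fin n) → Matrix (Fin n) (Fin n) ℝ}
  {σ1 : ℝ}

lemma sigma1_bound (hMpd : ∀ p ∈ Ω, (M p).PosDef) (hσ1 : IsLUB (sigma1Set Ω M) σ1)
    {p : EuclideanSpace ℝ (Fin n)} (hp : p ∈ Ω) (r : EuclideanSpace ℝ (Fin n)) :
    rho ((fderivWithin ℝ M Ω p r) * (M p)⁻¹) ≤ σ1 * ‖mav (M p) r‖ := by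
  rcases eq_or_ne r 0 with rfl | hr
  · have h1 : (fderivWithin ℝ M Ω p) (0 : EuclideanSpace ℝ (Fin n)) = 0 := map_zero _
    have h2 : mav (M p) 0 = 0 := by simp [mav]
    rw [h1, h2, Matrix.zero_mul, norm_zero, mul_zero]
    have : rho (0 : MAT) = 0 := by
      have : Tc (0 : MAT) = 0 := by ext x; simp [Tc_apply, mav]
      rw [rho_eq, this, norm_zero]
    simp [this]
  · set r' : EuclideanSpace ℝ (Fin n) := ‖r‖⁻¹ • r with hr'def
    have hr'norm : ‖r'‖ = 1 := norm_smul_inv_norm hr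
    have hr'ne : r' ≠ 0 := by
      intro h; rw [h] at hr'norm; simp at hr'norm
    have hmem : rho ((fderivWithin ℝ M Ω p r') * (M p)⁻¹) / ‖mav (M p) r'‖ ∈ sigma1Set Ω M :=
      ⟨p, hp, r', hr'norm, rfl⟩
    have hle := hσ1.1 hmem
    have hden : 0 < ‖mav (M p) r'‖ := mav_norm_pos (hMpd p hp) hr'ne
    have hkey : rho ((fderivWithin ℝ M Ω p r') * (M p)⁻¹) ≤ σ1 * ‖mav (M p) r'‖ := by
      rw [div_le_iff₀ hden] at hle
      linarith [hle]
    have hrpos : (0:ℝ) < ‖r‖ := norm_pos_iff.mpr hr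
    have hsc : r = ‖r‖ • r' := by
      rw [hr'def, smul_smul, mul_inv_cancel₀ (ne_of_gt hrpos), one_smul]
    have hd : (fderivWithin ℝ M Ω p) r = ‖r‖ • (fderivWithin ℝ M Ω p) r' := by
      conv_lhs => rw [hsc]
      exact map_smul _ _ _
    have hmm : ((fderivWithin ℝ M Ω p) r) * (M p)⁻¹
        = ‖r‖ • (((fderivWithin ℝ M Ω p) r') * (M p)⁻¹) := by
      rw [hd, Matrix.smul_mul]
    have hmav : ‖mav (M p) r‖ = ‖r‖ * ‖mav (M p) r'‖ := by
      conv_lhs => rw [hsc]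
      rw [mav_smul, norm_smul, Real.norm_eq_abs, abs_of_pos hrpos]
    rw [hmm, rho_smul, abs_of_pos hrpos, hmav]
    calc ‖r‖ * rho ((fderivWithin ℝ M Ω p r') * (M p)⁻¹)
        ≤ ‖r‖ * (σ1 * ‖mav (M p) r'‖) := by
          exact mul_le_mul_of_nonneg_left hkey (le_of_lt hrpos)
      _ = σ1 * (‖r‖ * ‖mav (M p) r'‖) := by ring

/-- The linear map `A ↦ mav A y` as a continuous linear map. -/
noncomputable def mavCLM (y : E) : Matrix (Fin n) (Fin n) ℝ →L[ℝ] EuclideanSpace ℝ (Fin n) :=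
  LinearMap.toContinuousLinearMap
    { toFun := fun A => mav A y
      map_add' := by intro A B; simp [mav]
      map_smul' := by intro c A; simp [mav] }

lemma mavCLM_apply (y : E) (A : MAT) : mavCLM y A = mav A y := rfl

lemma seg_deriv (hΩconv : Convex ℝ Ω) (hMc1 : ContDiffOn ℝ 1 M Ω)
    {a b : EuclideanSpace ℝ (Fin n)} (haΩ : a ∈ Ω) (hbΩ : b ∈ Ω)
    (y : EuclideanSpace ℝ (Fin n)) {t : ℝ} (ht : t ∈ Icc (0:ℝ) 1) :
    HasDerivWithinAt (fun s : ℝ => mav (M (a + s • (b - a))) y)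
      (mav ((fderivWithin ℝ M Ω (a + t • (b - a)) (b - a))) y) (Icc (0:ℝ) 1) t := by
  have hmaps : MapsTo (fun s : ℝ => a + s • (b - a)) (Icc (0:ℝ) 1) Ω := by
    intro s hs
    exact hΩconv.add_smul_sub_mem haΩ hbΩ hs
  have hγ : HasDerivWithinAt (fun s : ℝ => a + s • (b - a)) (b - a) (Icc (0:ℝ) 1) t := by
    have h1 : HasDerivAt (fun s : ℝ => s • (b - a)) ((1:ℝ) • (b - a)) t :=
      (hasDerivAt_id t).smul_const (b - a)
    have h2 : HasDerivAt (fun s : ℝ => a + s • (b - a)) ((1:ℝ) • (b - a)) t := h1.const_add a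
    simpa using h2.hasDerivWithinAt
  have hM' : HasFDerivWithinAt M (fderivWithin ℝ M Ω (a + t • (b - a))) Ω (a + t • (b - a)) :=
    ((hMc1.differentiableOn one_ne_zero) _ (hmaps ht)).hasFDerivWithinAt
  have hMγ : HasDerivWithinAt (fun s : ℝ => M (a + s • (b - a)))
      ((fderivWithin ℝ M Ω (a + t • (b - a))) (b - a)) (Icc (0:ℝ) 1) t :=
    hM'.comp_hasDerivWithinAt t hγ hmaps
  have := (mavCLM y).hasFDerivAt.comp_hasDerivWithinAt t hMγ
  exact this


lemma L1 (hΩconv : Convex ℝ Ω) (hMc1 : ContDiffOn ℝ 1 M Ω)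
    (hMpd : ∀ p ∈ Ω, (M p).PosDef) (hσ1 : IsLUB (sigma1Set Ω M) σ1)
    (hσ0 : 0 ≤ σ1)
    {a b : EuclideanSpace ℝ (Fin n)} (haΩ : a ∈ Ω) (hbΩ : b ∈ Ω)
    {X : ℝ} (hX1 : X < 1) (hX : σ1 * ‖mav (M a) (b - a)‖ ≤ X) :
    ∀ t ∈ Icc (0:ℝ) 1,
      ‖mav (M (a + t • (b - a))) (b - a)‖ ≤ ‖mav (M a) (b - a)‖ / (1 - X) := by
  rcases eq_or_ne (b - a) (0 : EuclideanSpace ℝ (Fin n)) with hba0 | hsub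
  · intro t ht
    rw [hba0]
    have h1 : ∀ A : Matrix (Fin n) (Fin n) ℝ, mav A (0 : EuclideanSpace ℝ (Fin n)) = 0 := by
      intro A; simp [mav]
    rw [h1, h1, norm_zero]
    simp
  intro t ht
  set γ : ℝ → EuclideanSpace ℝ (Fin n) := fun s => a + s • (b - a) with hγdef
  have hmaps : MapsTo γ (Icc (0:ℝ) 1) Ω := fun s hs => hΩconv.add_smul_sub_mem haΩ hbΩ hs
  set u : ℝ → EuclideanSpace ℝ (Fin n) := fun s => mav (M (γ s)) (b - a) with hudef
  set u' : ℝ → EuclideanSpace ℝ (Fin n) :=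
    fun s => mav ((fderivWithin ℝ M Ω (γ s)) (b - a)) (b - a) with hu'def
  have hu : ∀ s ∈ Icc (0:ℝ) 1, HasDerivWithinAt u (u' s) (Icc (0:ℝ) 1) s := by
    intro s hs
    exact seg_deriv hΩconv hMc1 haΩ hbΩ (b - a) hs
  have hupos : ∀ s ∈ Icc (0:ℝ) 1, 0 < ‖u s‖ := by
    intro s hs
    exact mav_norm_pos (hMpd _ (hmaps hs)) hsub
  have hu'bound : ∀ s ∈ Icc (0:ℝ) 1, ‖u' s‖ ≤ σ1 * ‖u s‖ * ‖u s‖ := by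
    intro s hs
    have hpd := hMpd _ (hmaps hs)
    have hfact : (fderivWithin ℝ M Ω (γ s)) (b - a)
        = (((fderivWithin ℝ M Ω (γ s)) (b - a)) * (M (γ s))⁻¹) * (M (γ s)) :=
      (matrix_inv_cancel hpd _).symm
    have hrw : u' s = mav ((((fderivWithin ℝ M Ω (γ s)) (b - a)) * (M (γ s))⁻¹)) (u s) := by
      show mav ((fderivWithin ℝ M Ω (γ s)) (b - a)) (b - a) = _
      conv_lhs => rw [hfact]
      rw [mav_mul]
    rw [hrw]
    calc ‖mav ((((fderivWithin ℝ M Ω (γ s)) (b - a)) * (M (γ s))⁻¹)) (u s)‖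
        ≤ rho (((fderivWithin ℝ M Ω (γ s)) (b - a)) * (M (γ s))⁻¹) * ‖u s‖ := mav_norm_le _ _
      _ ≤ (σ1 * ‖mav (M (γ s)) (b - a)‖) * ‖u s‖ := by
          apply mul_le_mul_of_nonneg_right _ (norm_nonneg _)
          exact sigma1_bound hMpd hσ1 (hmaps hs) (b - a)
      _ = σ1 * ‖u s‖ * ‖u s‖ := by ring
  -- the scalar functions
  set φ : ℝ → ℝ := fun s => (inner ℝ (u s) (u s) : ℝ) with hφdef
  set ψ : ℝ → ℝ := fun s => Real.sqrt (φ s) with hψdef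
  have hψnorm : ∀ s, ψ s = ‖u s‖ := by
    intro s
    rw [hψdef, hφdef]
    simp only [real_inner_self_eq_norm_mul_norm]
    exact Real.sqrt_mul_self (norm_nonneg _)
  have hφne : ∀ s ∈ Icc (0:ℝ) 1, φ s ≠ 0 := by
    intro s hs
    rw [hφdef]; simp only [real_inner_self_eq_norm_mul_norm]
    have := hupos s hs; positivity
  have hψd : ∀ s ∈ Icc (0:ℝ) 1, HasDerivWithinAt ψ
      ((1 / (2 * Real.sqrt (φ s))) * ((inner ℝ (u s) (u' s) : ℝ) + (inner ℝ (u' s) (u s) : ℝ)))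
      (Icc (0:ℝ) 1) s := by
    intro s hs
    have hφd : HasDerivWithinAt φ ((inner ℝ (u s) (u' s) : ℝ) + (inner ℝ (u' s) (u s) : ℝ))
        (Icc (0:ℝ) 1) s := HasDerivWithinAt.inner (𝕜 := ℝ) (hu s hs) (hu s hs)
    exact (Real.hasDerivAt_sqrt (hφne s hs)).comp_hasDerivWithinAt s hφd
  set dψ : ℝ → ℝ := fun s =>
    (1 / (2 * Real.sqrt (φ s))) * ((inner ℝ (u s) (u' s) : ℝ) + (inner ℝ (u' s) (u s) : ℝ)) with hdψdef
  have hdψle : ∀ s ∈ Icc (0:ℝ) 1, dψ s ≤ σ1 * ψ s * ψ s := by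
    intro s hs
    have hup := hupos s hs
    have h1 : (inner ℝ (u s) (u' s) : ℝ) ≤ ‖u s‖ * ‖u' s‖ := real_inner_le_norm _ _
    have h2 : (inner ℝ (u' s) (u s) : ℝ) ≤ ‖u' s‖ * ‖u s‖ := real_inner_le_norm _ _
    have hsq : Real.sqrt (φ s) = ‖u s‖ := (hψnorm s)
    rw [hdψdef]
    simp only [hsq]
    have hb := hu'bound s hs
    have hψs : ψ s = ‖u s‖ := hψnorm s
    rw [hψs]
    calc 1 / (2 * ‖u s‖) * ((inner ℝ (u s) (u' s) : ℝ) + (inner ℝ (u' s) (u s) : ℝ))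
        ≤ 1 / (2 * ‖u s‖) * (2 * (‖u' s‖ * ‖u s‖)) := by
          apply mul_le_mul_of_nonneg_left _ (by positivity)
          nlinarith [h1, h2]
      _ = ‖u' s‖ := by field_simp
      _ ≤ σ1 * ‖u s‖ * ‖u s‖ := hb
  -- the auxiliary decreasing function
  set H : ℝ → ℝ := fun s => -(ψ s)⁻¹ - σ1 * s with hHdef
  have hψpos : ∀ s ∈ Icc (0:ℝ) 1, 0 < ψ s := by
    intro s hs; rw [hψnorm]; exact hupos s hs
  have hHd : ∀ s ∈ Icc (0:ℝ) 1,
      HasDerivWithinAt H (dψ s / (ψ s)^2 - σ1) (Icc (0:ℝ) 1) s := by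
    intro s hs
    have h1 : HasDerivWithinAt (fun y => (ψ y)⁻¹) (-(dψ s) / (ψ s)^2) (Icc (0:ℝ) 1) s :=
      (hψd s hs).inv (ne_of_gt (hψpos s hs))
    have h2 : HasDerivWithinAt (fun y => -(ψ y)⁻¹) (dψ s / (ψ s)^2) (Icc (0:ℝ) 1) s := by
      have := h1.fun_neg
      rw [show dψ s / (ψ s)^2 = -(-(dψ s) / (ψ s)^2) by ring]
      exact this
    have h3 : HasDerivWithinAt (fun y : ℝ => σ1 * y) σ1 (Icc (0:ℝ) 1) s := by
      simpa using ((hasDerivAt_id s).const_mul σ1).hasDerivWithinAt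
    exact h2.sub h3
  have hHanti : AntitoneOn H (Icc (0:ℝ) 1) := by
    apply antitoneOn_of_deriv_nonpos (convex_Icc (0:ℝ) 1)
    · intro s hs
      exact (hHd s hs).continuousWithinAt
    · intro s hs
      rw [interior_Icc] at hs
      have hmem : s ∈ Icc (0:ℝ) 1 := Ioo_subset_Icc_self hs
      have := (hHd s hmem).hasDerivAt (Icc_mem_nhds hs.1 hs.2)
      exact this.differentiableAt.differentiableWithinAt
    · intro s hs
      rw [interior_Icc] at hs
      have hmem : s ∈ Icc (0:ℝ) 1 := Ioo_subset_Icc_self hs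
      have hda := (hHd s hmem).hasDerivAt (Icc_mem_nhds hs.1 hs.2)
      rw [hda.deriv]
      have := hdψle s hmem
      have hψp := hψpos s hmem
      have : dψ s / (ψ s)^2 ≤ σ1 := by
        rw [div_le_iff₀ (by positivity)]
        nlinarith [this]
      linarith
  -- conclude
  have h0mem : (0:ℝ) ∈ Icc (0:ℝ) 1 := ⟨le_refl 0, zero_le_one⟩
  have hH0 := hHanti h0mem ht ht.1
  have hu0 : u 0 = mav (M a) (b - a) := by
    rw [hudef, hγdef]; simp
  have hψ0 : ψ 0 = ‖mav (M a) (b - a)‖ := by rw [hψnorm, hu0]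
  have hψ0pos : 0 < ψ 0 := hψpos 0 h0mem
  have hψt := hψpos t ht
  -- from hH0 : -(ψ t)⁻¹ - σ1 * t ≤ -(ψ 0)⁻¹ - σ1 * 0
  have hkey : (ψ 0)⁻¹ - σ1 * t ≤ (ψ t)⁻¹ := by
    rw [hHdef] at hH0
    simp only [mul_zero, sub_zero] at hH0
    linarith
  have hσt : σ1 * t ≤ X / ψ 0 := by
    have hXψ : σ1 * ψ 0 ≤ X := by rw [hψ0]; exact hX
    have h1 : σ1 * t ≤ σ1 := by
      nlinarith [ht.2, ht.1, hσ0]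
    have h2 : σ1 ≤ X / ψ 0 := by
      rw [le_div_iff₀ hψ0pos]
      linarith [hXψ]
    linarith
  have hlow : (1 - X) / ψ 0 ≤ (ψ t)⁻¹ := by
    have : (1 - X) / ψ 0 = (ψ 0)⁻¹ - X / ψ 0 := by field_simp
    rw [this]
    linarith [hkey, hσt]
  have hXpos : 0 < 1 - X := by linarith
  have hlowpos : 0 < (1 - X) / ψ 0 := by positivity
  have : ψ t ≤ ψ 0 / (1 - X) := by
    have h1 : ψ t ≤ ((1 - X) / ψ 0)⁻¹ := by
      rw [← inv_inv (ψ t)]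
      exact inv_anti₀ hlowpos hlow
    calc ψ t ≤ ((1 - X) / ψ 0)⁻¹ := h1
      _ = ψ 0 / (1 - X) := by rw [inv_div]
  calc ‖mav (M (a + t • (b - a))) (b - a)‖ = ψ t := (hψnorm t).symm
    _ ≤ ψ 0 / (1 - X) := this
    _ = ‖mav (M a) (b - a)‖ / (1 - X) := by rw [hψ0]


lemma transport (hΩconv : Convex ℝ Ω) (hMc1 : ContDiffOn ℝ 1 M Ω)
    (hMpd : ∀ p ∈ Ω, (M p).PosDef) (hσ1 : IsLUB (sigma1Set Ω M) σ1)
    (hσ0 : 0 ≤ σ1)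
    {a b : EuclideanSpace ℝ (Fin n)} (haΩ : a ∈ Ω) (hbΩ : b ∈ Ω)
    {X : ℝ} (hX0 : 0 ≤ X) (hX2 : X < 1/2) (hX : σ1 * ‖mav (M a) (b - a)‖ ≤ X)
    (y : EuclideanSpace ℝ (Fin n)) :
    ‖mav (M b) y‖ ≤ ‖mav (M a) y‖ * ((1 - X) / (1 - 2*X)) := by
  have hX1 : X < 1 := by linarith
  have hXpos : (0:ℝ) < 1 - X := by linarith
  have hX2pos : (0:ℝ) < 1 - 2*X := by linarith
  set K : ℝ := X / (1 - X) with hKdef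
  have hK0 : 0 ≤ K := by positivity
  have hK1 : K < 1 := by
    rw [hKdef, div_lt_one hXpos]; linarith
  set γ : ℝ → EuclideanSpace ℝ (Fin n) := fun s => a + s • (b - a) with hγdef
  have hmaps : MapsTo γ (Icc (0:ℝ) 1) Ω := fun s hs => hΩconv.add_smul_sub_mem haΩ hbΩ hs
  set u : ℝ → EuclideanSpace ℝ (Fin n) := fun s => mav (M (γ s)) y with hudef
  set u' : ℝ → EuclideanSpace ℝ (Fin n) :=
    fun s => mav ((fderivWithin ℝ M Ω (γ s)) (b - a)) y with hu'def
  have hu : ∀ s ∈ Icc (0:ℝ) 1, HasDerivWithinAt u (u' s) (Icc (0:ℝ) 1) s := by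
    intro s hs
    exact seg_deriv hΩconv hMc1 haΩ hbΩ y hs
  have hu'bound : ∀ s ∈ Icc (0:ℝ) 1, ‖u' s‖ ≤ K * ‖u s‖ := by
    intro s hs
    have hpd := hMpd _ (hmaps hs)
    have hfact : (fderivWithin ℝ M Ω (γ s)) (b - a)
        = (((fderivWithin ℝ M Ω (γ s)) (b - a)) * (M (γ s))⁻¹) * (M (γ s)) :=
      (matrix_inv_cancel hpd _).symm
    have hrw : u' s = mav ((((fderivWithin ℝ M Ω (γ s)) (b - a)) * (M (γ s))⁻¹)) (u s) := by
      show mav ((fderivWithin ℝ M Ω (γ s)) (b - a)) y = _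
      conv_lhs => rw [hfact]
      rw [mav_mul]
    rw [hrw]
    have hL1 := L1 hΩconv hMc1 hMpd hσ1 hσ0 haΩ hbΩ hX1 hX s hs
    have hσψ : σ1 * ‖mav (M (γ s)) (b - a)‖ ≤ K := by
      have h1 : σ1 * ‖mav (M (γ s)) (b - a)‖ ≤ σ1 * (‖mav (M a) (b - a)‖ / (1 - X)) :=
        mul_le_mul_of_nonneg_left hL1 hσ0
      have h2 : σ1 * (‖mav (M a) (b - a)‖ / (1 - X)) ≤ X / (1 - X) := by
        rw [mul_div_assoc'] 
        gcongr
      linarith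
    calc ‖mav ((((fderivWithin ℝ M Ω (γ s)) (b - a)) * (M (γ s))⁻¹)) (u s)‖
        ≤ rho (((fderivWithin ℝ M Ω (γ s)) (b - a)) * (M (γ s))⁻¹) * ‖u s‖ := mav_norm_le _ _
      _ ≤ (σ1 * ‖mav (M (γ s)) (b - a)‖) * ‖u s‖ := by
          apply mul_le_mul_of_nonneg_right _ (norm_nonneg _)
          exact sigma1_bound hMpd hσ1 (hmaps hs) (b - a)
      _ ≤ K * ‖u s‖ := mul_le_mul_of_nonneg_right hσψ (norm_nonneg _)
  have hucont : ContinuousOn u (Icc (0:ℝ) 1) := fun s hs => (hu s hs).continuousWithinAt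
  have hu'Ici : ∀ s ∈ Ico (0:ℝ) 1, HasDerivWithinAt u (u' s) (Ici s) s := by
    intro s hs
    apply (hu s (Ico_subset_Icc_self hs)).mono_of_mem_nhdsWithin
    apply mem_nhdsWithin.2
    exact ⟨Iio 1, isOpen_Iio, hs.2, by
      intro y hy
      exact ⟨le_trans hs.1 hy.2, le_of_lt hy.1⟩⟩
  have hbound : ∀ s ∈ Ico (0:ℝ) 1, ‖u' s‖ ≤ K * ‖u s‖ + 0 := by
    intro s hs
    rw [add_zero]
    exact hu'bound s (Ico_subset_Icc_self hs)
  have hgron := norm_le_gronwallBound_of_norm_deriv_right_le hucont hu'Ici (le_refl ‖u 0‖) hbound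
  have h1 := hgron 1 ⟨zero_le_one, le_refl 1⟩
  rw [gronwallBound_ε0] at h1
  have hexp : Real.exp (K * (1 - 0)) ≤ (1 - X) / (1 - 2*X) := by
    have hKfact : (1 - K) * Real.exp K ≤ 1 := by
      have h := Real.add_one_le_exp (-K)
      have hEK : 0 < Real.exp K := Real.exp_pos K
      have h' : (1 - K) ≤ Real.exp (-K) := by linarith
      calc (1 - K) * Real.exp K ≤ Real.exp (-K) * Real.exp K := by
            apply mul_le_mul_of_nonneg_right h' (le_of_lt hEK)
        _ = 1 := by rw [← Real.exp_add]; simp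
    have hKc : 0 < 1 - K := by linarith
    have h2 : Real.exp K ≤ 1 / (1 - K) := by
      rw [le_div_iff₀ hKc]
      linarith [hKfact]
    have hK' : 1 - K = (1 - 2*X) / (1 - X) := by
      rw [hKdef]
      field_simp
      ring
    have h3 : 1 / (1 - K) = (1 - X) / (1 - 2*X) := by
      rw [hK', one_div_div]
    rw [sub_zero, mul_one]
    rw [h3] at h2
    exact h2
  have hu1 : u 1 = mav (M b) y := by
    rw [hudef, hγdef]
    simp
  have hu0 : u 0 = mav (M a) y := by
    rw [hudef, hγdef]
    simp
  calc ‖mav (M b) y‖ = ‖u 1‖ := by rw [hu1]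
    _ ≤ ‖u 0‖ * Real.exp (K * (1 - 0)) := h1
    _ ≤ ‖u 0‖ * ((1 - X) / (1 - 2*X)) := mul_le_mul_of_nonneg_left hexp (norm_nonneg _)
    _ = ‖mav (M a) y‖ * ((1 - X) / (1 - 2*X)) := by rw [hu0]


set_option maxHeartbeats 1000000 in
lemma tied_bound (hΩconv : Convex ℝ Ω) (hMc1 : ContDiffOn ℝ 1 M Ω)
    (hMpd : ∀ p ∈ Ω, (M p).PosDef) (hσ1 : IsLUB (sigma1Set Ω M) σ1) (hσ0 : 0 ≤ σ1)
    {q v w : EuclideanSpace ℝ (Fin n)} (hqΩ : q ∈ Ω) (hvΩ : v ∈ Ω) (hwΩ : w ∈ Ω)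
    {ε s : ℝ} (hsv : ‖mav (M v) (q - v)‖ = s) (hsw : ‖mav (M w) (q - w)‖ = s)
    (hspos : 0 < s) (hsε : s ≤ ε) (hc : σ1 * s ≤ 0.09868)
    (hpk : ε ≤ ‖mav (M w) (v - w)‖ ∨ ε ≤ ‖mav (M v) (w - v)‖) :
    (inner ℝ (mav (M w) (q - w)) (mav (M w) (q - v)) : ℝ) ≤ 0.93 * s^2 := by
  set c : ℝ := 0.09868 with hcdef
  set A₁ : ℝ := (1 - c) / (1 - 2*c) with hA₁def
  set A₂ : ℝ := (1 - 0.1109) / (1 - 2*0.1109) with hA₂def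
  have hA₁pos : 0 < A₁ := by rw [hA₁def, hcdef]; norm_num
  have hA₁ge1 : 1 ≤ A₁ := by rw [hA₁def, hcdef]; norm_num
  have hA₂pos : 0 < A₂ := by rw [hA₂def]; norm_num
  -- T1 : transport from v to q
  have T1 : ∀ y, ‖mav (M q) y‖ ≤ ‖mav (M v) y‖ * A₁ := by
    intro y
    have := transport hΩconv hMc1 hMpd hσ1 hσ0 hvΩ hqΩ
      (X := c) (by rw [hcdef]; norm_num) (by rw [hcdef]; norm_num)
      (by rw [hsv]; exact hc) y
    exact this
  -- T2 : transport from w to q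
  have T2 : ∀ y, ‖mav (M q) y‖ ≤ ‖mav (M w) y‖ * A₁ := by
    intro y
    have := transport hΩconv hMc1 hMpd hσ1 hσ0 hwΩ hqΩ
      (X := c) (by rw [hcdef]; norm_num) (by rw [hcdef]; norm_num)
      (by rw [hsw]; exact hc) y
    exact this
  -- step 2 : ‖mav (M q) (w - q)‖ ≤ s * A₁
  have hwq : ‖mav (M w) (w - q)‖ = s := by
    rw [show (w - q : EuclideanSpace ℝ (Fin n)) = -(q - w) by abel, mav_neg, norm_neg, hsw]
  have hdwq : ‖mav (M q) (w - q)‖ ≤ s * A₁ := by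
    calc ‖mav (M q) (w - q)‖ ≤ ‖mav (M w) (w - q)‖ * A₁ := T2 _
      _ = s * A₁ := by rw [hwq]
  -- T3 : transport from q to w
  have hc₂ : σ1 * ‖mav (M q) (w - q)‖ ≤ 0.1109 := by
    have h1 : σ1 * ‖mav (M q) (w - q)‖ ≤ σ1 * (s * A₁) :=
      mul_le_mul_of_nonneg_left hdwq hσ0
    have h2 : σ1 * (s * A₁) = (σ1 * s) * A₁ := by ring
    have h3 : (σ1 * s) * A₁ ≤ c * A₁ := mul_le_mul_of_nonneg_right hc (le_of_lt hA₁pos)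
    have h4 : c * A₁ ≤ 0.1109 := by rw [hcdef, hA₁def, hcdef]; norm_num
    calc σ1 * ‖mav (M q) (w - q)‖ ≤ σ1 * (s * A₁) := h1
      _ = (σ1 * s) * A₁ := h2
      _ ≤ c * A₁ := h3
      _ ≤ 0.1109 := h4
  have T3 : ∀ y, ‖mav (M w) y‖ ≤ ‖mav (M q) y‖ * A₂ := by
    intro y
    have := transport hΩconv hMc1 hMpd hσ1 hσ0 hqΩ hwΩ
      (X := (0.1109:ℝ)) (by norm_num) (by norm_num) hc₂ y
    exact this
  -- bound on b
  have hb : ‖mav (M w) (q - v)‖ ≤ s * A₁ * A₂ := by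
    calc ‖mav (M w) (q - v)‖ ≤ ‖mav (M q) (q - v)‖ * A₂ := T3 _
      _ ≤ (‖mav (M v) (q - v)‖ * A₁) * A₂ :=
          mul_le_mul_of_nonneg_right (T1 _) (le_of_lt hA₂pos)
      _ = s * A₁ * A₂ := by rw [hsv]
  -- lower bound on ‖mav (M w) (v - w)‖
  have hL : s / A₁ ≤ ‖mav (M w) (v - w)‖ := by
    have hsA : s / A₁ ≤ s := by
      rw [div_le_iff₀ hA₁pos]
      nlinarith
    rcases hpk with h | h
    · linarith
    · by_cases hbig : s ≤ ‖mav (M w) (v - w)‖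
      · linarith
      · push_neg at hbig
        have htr : ∀ y, ‖mav (M v) y‖ ≤ ‖mav (M w) y‖ * A₁ := by
          intro y
          have := transport hΩconv hMc1 hMpd hσ1 hσ0 hwΩ hvΩ
            (X := c) (by rw [hcdef]; norm_num) (by rw [hcdef]; norm_num)
            (by
              have h1 : σ1 * ‖mav (M w) (v - w)‖ ≤ σ1 * s :=
                mul_le_mul_of_nonneg_left (le_of_lt hbig) hσ0
              linarith) y
          exact this
        have h2 : ‖mav (M v) (w - v)‖ ≤ ‖mav (M w) (v - w)‖ * A₁ := by
          have h2' := htr (w - v)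
          have heq : ‖mav (M w) (w - v)‖ = ‖mav (M w) (v - w)‖ := by
            rw [show (w - v : EuclideanSpace ℝ (Fin n)) = -(v - w) from by abel, mav_neg, norm_neg]
          rw [heq] at h2'
          exact h2'
        have h3 : ε ≤ ‖mav (M w) (v - w)‖ * A₁ := le_trans h h2
        rw [div_le_iff₀ hA₁pos]
        linarith
  -- assemble
  have hnum : (1 + (A₁*A₂)^2 - (1/A₁)^2) / 2 ≤ 0.93 := by
    rw [hA₁def, hA₂def, hcdef]
    norm_num
  clear_value c A₁ A₂
  clear hcdef hA₁def hA₂def hc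
  set x : EuclideanSpace ℝ (Fin n) := mav (M w) (q - w) with hxdef
  set b : EuclideanSpace ℝ (Fin n) := mav (M w) (q - v) with hbdef
  have hxb : x - b = mav (M w) (v - w) := by
    rw [hxdef, hbdef, ← mav_sub]
    congr 1
    abel
  have hinner : (inner ℝ x b : ℝ) = (‖x‖^2 + ‖b‖^2 - ‖x - b‖^2) / 2 := by
    have := norm_sub_sq_real x b
    linarith
  have hxnorm : ‖x‖ = s := hsw
  have hbnorm : ‖b‖ ≤ s * A₁ * A₂ := hb
  have hxbnorm : s / A₁ ≤ ‖x - b‖ := by rw [hxb]; exact hL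
  have hb0 : 0 ≤ ‖b‖ := norm_nonneg _
  have hbsq : ‖b‖^2 ≤ (s * A₁ * A₂)^2 := by
    have hsb : 0 ≤ s * A₁ * A₂ := by positivity
    nlinarith
  have hxbsq : (s / A₁)^2 ≤ ‖x - b‖^2 := by
    have h0 : 0 ≤ s / A₁ := by positivity
    nlinarith [norm_nonneg (x - b)]
  rw [hinner, hxnorm]
  have hexp1 : (s * A₁ * A₂)^2 = (A₁*A₂)^2 * s^2 := by ring
  have hexp2 : (s / A₁)^2 = (1/A₁)^2 * s^2 := by ring
  have hmul := mul_le_mul_of_nonneg_right hnum (sq_nonneg s)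
  linarith [hbsq, hxbsq, hmul]


end OFree

set_option maxHeartbeats 1000000 in
theorem stmt12 {n : ℕ} (Ω : Set (EuclideanSpace ℝ (Fin n)))
    (hΩc : IsCompact Ω) (hΩconv : Convex ℝ Ω)
    (M : EuclideanSpace ℝ (Fin n) → Matrix (Fin n) (Fin n) ℝ)
    (hMc1 : ContDiffOn ℝ 1 M Ω) (hMpd : ∀ p ∈ Ω, (M p).PosDef)
    (V : Set (EuclideanSpace ℝ (Fin n))) (hVfin : V.Finite) (hVsub : V ⊆ Ω)
    (ε σ1 : ℝ) (hσ1 : IsLUB (sigma1Set Ω M) σ1)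
    (hcover : ∀ p ∈ Ω, ∃ v ∈ V, ‖mav (M v) (p - v)‖ ≤ ε)
    (hpack : ∀ v ∈ V, ∀ w ∈ V, v ≠ w →
      ε ≤ ‖mav (M w) (v - w)‖ ∨ ε ≤ ‖mav (M v) (w - v)‖)
    (hcond : σ1 * ε ≤ 0.09868) :
    ∀ v ∈ V, ∀ p ∈ vorRegion Ω V (fun a b => ‖mav (M b) (a - b)‖) v,
      v ∈ connectedComponentIn (vorRegion Ω V (fun a b => ‖mav (M b) (a - b)‖) v) p := by
  classical
  intro v hvV p hpR
  set R := vorRegion Ω V (fun a b => ‖mav (M b) (a - b)‖) v with hRdef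
  by_contra hvC
  have hcontw : ∀ w : EuclideanSpace ℝ (Fin n),
      Continuous (fun z : EuclideanSpace ℝ (Fin n) => ‖mav (M w) (z - w)‖) := by
    intro w
    have h1 : Continuous (fun z : EuclideanSpace ℝ (Fin n) => OFree.Tc (M w) (z - w)) :=
      (OFree.Tc (M w)).continuous.comp (continuous_id.sub continuous_const)
    exact h1.norm
  have hRsub : R ⊆ Ω := fun z hz => hz.1
  have hRclosed : IsClosed R := by
    have hre : R = Ω ∩ ⋂ w ∈ V,
        {z : EuclideanSpace ℝ (Fin n) | ‖mav (M v) (z - v)‖ ≤ ‖mav (M w) (z - w)‖} := by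
      ext z
      simp only [hRdef, vorRegion, Set.mem_setOf_eq, Set.mem_inter_iff, Set.mem_iInter]
    rw [hre]
    exact (hΩc.isClosed).inter (isClosed_biInter fun w _ =>
      isClosed_le (hcontw v) (hcontw w))
  have hRcomp : IsCompact R := hΩc.of_isClosed_subset hRclosed hRsub
  have hpC : p ∈ connectedComponentIn R p := mem_connectedComponentIn hpR
  have hCR : connectedComponentIn R p ⊆ R := connectedComponentIn_subset R p
  have hCcomp : IsCompact (connectedComponentIn R p) := by
    rw [connectedComponentIn_eq_image hpR]
    have hcs : CompactSpace R := isCompact_iff_compactSpace.mp hRcomp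
    exact (isClosed_connectedComponent).isCompact.image continuous_subtype_val
  obtain ⟨q, hqC, hqmin⟩ := hCcomp.exists_isMinOn ⟨p, hpC⟩ ((hcontw v).continuousOn)
  have hqR : q ∈ R := hCR hqC
  have hqΩ : q ∈ Ω := hqR.1
  have hvΩ : v ∈ Ω := hVsub hvV
  have hqv : q ≠ v := by
    intro h
    exact hvC (h ▸ hqC)
  set s := ‖mav (M v) (q - v)‖ with hsdef
  have hspos : 0 < s := OFree.mav_norm_pos (hMpd v hvΩ) (sub_ne_zero.mpr hqv)
  obtain ⟨w₀, hw₀V, hw₀⟩ := hcover q hqΩ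
  have hsε : s ≤ ε := le_trans (hqR.2 w₀ hw₀V) hw₀
  have hσ0 : 0 ≤ σ1 := by
    set r : EuclideanSpace ℝ (Fin n) := ‖q - v‖⁻¹ • (q - v) with hrdef
    have hr : ‖r‖ = 1 := norm_smul_inv_norm (sub_ne_zero.mpr hqv)
    have hmem : rho ((fderivWithin ℝ M Ω v r) * (M v)⁻¹) / ‖mav (M v) r‖ ∈ sigma1Set Ω M :=
      ⟨v, hvΩ, r, hr, rfl⟩
    have hle := hσ1.1 hmem
    have hge : 0 ≤ rho ((fderivWithin ℝ M Ω v r) * (M v)⁻¹) / ‖mav (M v) r‖ :=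
      div_nonneg (OFree.rho_nonneg _) (norm_nonneg _)
    linarith
  have hcs : σ1 * s ≤ 0.09868 :=
    le_trans (mul_le_mul_of_nonneg_left hsε hσ0) hcond
  -- the step size
  set g : EuclideanSpace ℝ (Fin n) → ℝ := fun w =>
    if s < ‖mav (M w) (q - w)‖ then
      (‖mav (M w) (q - w)‖ - s) / (‖mav (M w) (q - v)‖ + 1) else 1 with hgdef
  have hVfne : (hVfin.toFinset).Nonempty := ⟨v, hVfin.mem_toFinset.mpr hvV⟩
  set tstar : ℝ := min 0.14 (min 1 (hVfin.toFinset.inf' hVfne g)) with htstardef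
  have hgpos : ∀ w, 0 < g w := by
    intro w
    simp only [hgdef]
    by_cases h : s < ‖mav (M w) (q - w)‖
    · rw [if_pos h]
      apply div_pos (by linarith) (by positivity)
    · rw [if_neg h]
      norm_num
  have htpos : 0 < tstar := by
    rw [htstardef]
    apply lt_min (by norm_num)
    apply lt_min one_pos
    rw [Finset.lt_inf'_iff]
    exact fun w _ => hgpos w
  have ht14 : tstar ≤ 0.14 := min_le_left _ _
  have ht1 : tstar ≤ 1 := le_trans (min_le_right _ _) (min_le_left _ _)
  have htg : ∀ w ∈ V, tstar ≤ g w := by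
    intro w hw
    exact le_trans (le_trans (min_le_right _ _) (min_le_right _ _))
      (Finset.inf'_le g (hVfin.mem_toFinset.mpr hw))
  -- the segment stays in R
  have hseg : ∀ t : ℝ, 0 ≤ t → t ≤ tstar → q + t • (v - q) ∈ R := by
    intro t ht0 htt
    have htle1 : t ≤ 1 := le_trans htt ht1
    have hptΩ : q + t • (v - q) ∈ Ω := hΩconv.add_smul_sub_mem hqΩ hvΩ ⟨ht0, htle1⟩
    refine ⟨hptΩ, ?_⟩
    intro w hwV
    show ‖mav (M v) (q + t • (v - q) - v)‖ ≤ ‖mav (M w) (q + t • (v - q) - w)‖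
    have hLv : q + t • (v - q) - v = (1 - t) • (q - v) := by module
    have hLHS : ‖mav (M v) (q + t • (v - q) - v)‖ = (1 - t) * s := by
      rw [hLv, OFree.mav_smul, norm_smul, Real.norm_eq_abs, abs_of_nonneg (by linarith), hsdef]
    by_cases hwv : w = v
    · subst hwv
      exact le_refl _
    · have hRw : q + t • (v - q) - w = (q - w) + t • (v - q) := by module
      have hvqneg : mav (M w) (v - q) = - mav (M w) (q - v) := by
        rw [show (v - q : EuclideanSpace ℝ (Fin n)) = -(q - v) from by abel, OFree.mav_neg]
      have hexp : mav (M w) (q + t • (v - q) - w)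
          = mav (M w) (q - w) - t • mav (M w) (q - v) := by
        rw [hRw]
        have : mav (M w) ((q - w) + t • (v - q))
            = mav (M w) (q - w) + t • mav (M w) (v - q) := by
          have h1 : ((q - w) + t • (v - q) : EuclideanSpace ℝ (Fin n))
              = (q - w) - (-(t • (v - q))) := by abel
          rw [h1, OFree.mav_sub, OFree.mav_neg, OFree.mav_smul]
          abel
        rw [this, hvqneg, smul_neg]
        abel
      set x : EuclideanSpace ℝ (Fin n) := mav (M w) (q - w) with hxdef
      set b : EuclideanSpace ℝ (Fin n) := mav (M w) (q - v) with hbdef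
      rw [hLHS, hexp]
      have hsdw : s ≤ ‖x‖ := hqR.2 w hwV
      rcases eq_or_lt_of_le hsdw with heq | hlt
      · -- tied site
        have hinner : (inner ℝ x b : ℝ) ≤ 0.93 * s^2 :=
          OFree.tied_bound hΩconv hMc1 hMpd hσ1 hσ0 hqΩ hvΩ (hVsub hwV)
            hsdef.symm heq.symm hspos hsε hcs
            (hpack v hvV w hwV (fun hh => hwv hh.symm))
        have hxs : ‖x‖ = s := heq.symm
        have hsq : ((1 - t) * s)^2 ≤ ‖x - t • b‖^2 := by
          have hnorm : ‖x - t • b‖^2 = ‖x‖^2 - 2 * (t * (inner ℝ x b : ℝ)) + t^2 * ‖b‖^2 := by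
            have h1 := norm_sub_sq_real x (t • b)
            have h2 : (inner ℝ x (t • b) : ℝ) = t * (inner ℝ x b : ℝ) := real_inner_smul_right _ _ _
            have h3 : ‖t • b‖^2 = t^2 * ‖b‖^2 := by
              rw [norm_smul, Real.norm_eq_abs, mul_pow, sq_abs]
            rw [h1, h2, h3]
          rw [hnorm, hxs]
          have h2tI : 2 * t * (inner ℝ x b : ℝ) ≤ 2 * t * (0.93 * s^2) :=
            mul_le_mul_of_nonneg_left hinner (by linarith)
          have hfin : 0 ≤ t * s^2 * (0.14 - t) :=
            mul_nonneg (mul_nonneg ht0 (sq_nonneg s)) (by linarith)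
          nlinarith [sq_nonneg (t * ‖b‖)]
        have hnn : 0 ≤ ‖x - t • b‖ := norm_nonneg _
        exact le_of_pow_le_pow_left₀ two_ne_zero hnn hsq
      · -- untied site
        have htgw := le_trans htt (htg w hwV)
        simp only [hgdef] at htgw
        rw [if_pos hlt] at htgw
        have hbpos : (0:ℝ) < ‖b‖ + 1 := by positivity
        have hmul : t * (‖b‖ + 1) ≤ ‖x‖ - s := by
          rw [← le_div_iff₀ hbpos]
          exact htgw
        have hlow : ‖x‖ - ‖t • b‖ ≤ ‖x - t • b‖ := norm_sub_norm_le _ _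
        have hts : ‖t • b‖ = t * ‖b‖ := by
          rw [norm_smul, Real.norm_eq_abs, abs_of_nonneg ht0]
        have hts0 : 0 ≤ t * s := mul_nonneg ht0 (le_of_lt hspos)
        have htb0 : 0 ≤ t * ‖b‖ := mul_nonneg ht0 (norm_nonneg _)
        nlinarith [hlow, hts, hmul]
  -- conclude by connectedness and minimality
  set q' : EuclideanSpace ℝ (Fin n) := q + tstar • (v - q) with hq'def
  set Sg : Set (EuclideanSpace ℝ (Fin n)) :=
    (fun t : ℝ => q + t • (v - q)) '' Icc 0 tstar with hSgdef
  have hSgR : Sg ⊆ R := by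
    rintro z ⟨t, ⟨ht0, htt⟩, rfl⟩
    exact hseg t ht0 htt
  have hSgconn : IsPreconnected Sg := by
    apply IsPreconnected.image isPreconnected_Icc
    apply Continuous.continuousOn
    exact continuous_const.add (continuous_id.smul continuous_const)
  have hqSg : q ∈ Sg := ⟨0, ⟨le_refl 0, le_of_lt htpos⟩, by simp⟩
  have hSgC : Sg ⊆ connectedComponentIn R q :=
    hSgconn.subset_connectedComponentIn hqSg hSgR
  have hCeq : connectedComponentIn R p = connectedComponentIn R q := connectedComponentIn_eq hqC
  have hq'Sg : q' ∈ Sg := ⟨tstar, ⟨le_of_lt htpos, le_refl _⟩, rfl⟩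
  have hq'C : q' ∈ connectedComponentIn R p := by
    rw [hCeq]
    exact hSgC hq'Sg
  have hle : s ≤ ‖mav (M v) (q' - v)‖ := isMinOn_iff.mp hqmin q' hq'C
  have hq'v : ‖mav (M v) (q' - v)‖ = (1 - tstar) * s := by
    rw [hq'def]
    have hLv : q + tstar • (v - q) - v = (1 - tstar) • (q - v) := by module
    rw [hLv, OFree.mav_smul, norm_smul, Real.norm_eq_abs, abs_of_nonneg (by linarith), hsdef]
  rw [hq'v] at hle
  nlinarith [mul_pos htpos hspos]
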